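/- arXiv:2102.04092 — 5 statements merged into one kernel-verified Lean document; each statement's English description precedes it below -/
import Mathlib

section
/- Let d(x) = α + β·x^p with α > 0, β ≥ 0, p ≥ 1. Then there exists a > 0 such that for all x, y ≥ 0 with |x − y| ≤ a and x ≠ y, one has a ≤ |x − y|·max(d(x), d(y)) / |d(x) − d(y)|. -/
open Real

lemma key_rpow {p x y : ℝ} (hp : 1 ≤ p) (hy : 0 ≤ y) (hxy : y ≤ x) :
    x ^ p - y ^ p ≤ p * x ^ (p - 1) * (x - y) := by
  have hx : 0 ≤ x := hy.trans hxy
  rcases eq_or_lt_of_le hx with h | hx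
  · have hy0 : y = 0 := le_antisymm (h ▸ hxy) hy
    have hp0 : p ≠ 0 := by linarith
    simp [← h, hy0, Real.zero_rpow hp0]
  · have hb := one_add_mul_self_le_rpow_one_add (s := y / x - 1) (by
      have : 0 ≤ y / x := div_nonneg hy hx.le
      linarith) hp
    rw [show (1 : ℝ) + (y / x - 1) = y / x by ring] at hb
    rw [Real.div_rpow hy hx.le] at hb
    have hxp : 0 < x ^ p := Real.rpow_pos_of_pos hx p
    have hmul := mul_le_mul_of_nonneg_right hb hxp.le
    rw [div_mul_cancel₀ _ (ne_of_gt hxp)] at hmul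
    have hxp1 : x ^ (p - 1) = x ^ p / x := by
      rw [Real.rpow_sub hx, Real.rpow_one]
    have hxx : x ^ p = x ^ (p - 1) * x := by
      rw [hxp1, div_mul_cancel₀ _ (ne_of_gt hx)]
    have h2 : (1 + p * (y / x - 1)) * x ^ p
        = x ^ p + p * x ^ (p - 1) * (y - x) := by
      rw [hxx]; field_simp
    rw [h2] at hmul
    linarith

theorem stmt_0 (α β p : ℝ) (hα : 0 < α) (hβ : 0 ≤ β) (hp : 1 ≤ p)
    (d : ℝ → ℝ) (hd : ∀ x, 0 ≤ x → d x = α + β * x ^ p) :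
    ∃ a > 0, ∀ x y : ℝ, 0 ≤ x → 0 ≤ y → |x - y| ≤ a → x ≠ y →
      |d x - d y| * a ≤ |x - y| * max (d x) (d y) := by
  have hp0 : 0 < p := by linarith
  set a := min (1 / p) (α / (β * p + 1)) with ha_def
  have hbp1 : 0 < β * p + 1 := by positivity
  have ha : 0 < a := lt_min (by positivity) (by positivity)
  refine ⟨a, ha, ?_⟩
  -- main claim for ordered pair y < x
  have main : ∀ x y : ℝ, 0 ≤ y → y < x →
      |d x - d y| * a ≤ |x - y| * max (d x) (d y) := by
    intro x y hy hxy
    have hx : 0 ≤ x := hy.trans hxy.le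
    have hdx := hd x hx
    have hdy := hd y hy
    have hple : y ^ p ≤ x ^ p := Real.rpow_le_rpow hy hxy.le hp0.le
    have hdd : d y ≤ d x := by rw [hdx, hdy]; nlinarith
    have hmax : max (d x) (d y) = d x := max_eq_left hdd
    have habs : |d x - d y| = β * (x ^ p - y ^ p) := by
      rw [abs_of_nonneg (by linarith), hdx, hdy]; ring
    have habs2 : |x - y| = x - y := abs_of_nonneg (by linarith)
    rw [hmax, habs, habs2, hdx]
    have hkey := key_rpow hp hy hxy.le
    -- it suffices: a * (β * p * x ^ (p-1)) ≤ α + β * x ^ p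
    have hsuff : a * (β * p * x ^ (p - 1)) ≤ α + β * x ^ p := by
      rcases le_total x 1 with hx1 | hx1
      · have h1 : x ^ (p - 1) ≤ 1 :=
          Real.rpow_le_one hx hx1 (by linarith)
        have h2 : a * (β * p * x ^ (p - 1)) ≤ a * (β * p) := by
          apply mul_le_mul_of_nonneg_left _ ha.le
          nlinarith [mul_le_mul_of_nonneg_left h1 (mul_nonneg hβ hp0.le)]
        have h3 : a * (β * p) ≤ a * (β * p + 1) := by nlinarith
        have h4 : a * (β * p + 1) ≤ α := by
          have := min_le_right (1 / p) (α / (β * p + 1))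
          calc a * (β * p + 1) ≤ (α / (β * p + 1)) * (β * p + 1) := by
                apply mul_le_mul_of_nonneg_right this hbp1.le
            _ = α := by field_simp
        have h5 : 0 ≤ β * x ^ p := by positivity
        linarith
      · have h1 : x ^ (p - 1) ≤ x ^ p :=
          Real.rpow_le_rpow_of_exponent_le hx1 (by linarith)
        have hxp : 0 ≤ x ^ p := Real.rpow_nonneg hx p
        have h2 : a * (β * p * x ^ (p - 1)) ≤ a * (β * p * x ^ p) := by
          apply mul_le_mul_of_nonneg_left _ ha.le
          nlinarith [mul_le_mul_of_nonneg_left h1 (mul_nonneg hβ hp0.le)]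
        have h3 : a ≤ 1 / p := min_le_left _ _
        have h4 : a * (β * p * x ^ p) ≤ (1 / p) * (β * p * x ^ p) := by
          apply mul_le_mul_of_nonneg_right h3 (by positivity)
        have h5 : (1 / p) * (β * p * x ^ p) = β * x ^ p := by
          field_simp
        linarith
    have hxy' : 0 < x - y := by linarith
    have hbnn : 0 ≤ β * (x ^ p - y ^ p) := by nlinarith
    calc β * (x ^ p - y ^ p) * a
        ≤ β * (p * x ^ (p - 1) * (x - y)) * a := by
          apply mul_le_mul_of_nonneg_right _ ha.le
          nlinarith
      _ = (x - y) * (a * (β * p * x ^ (p - 1))) := by ring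
      _ ≤ (x - y) * (α + β * x ^ p) := by
          apply mul_le_mul_of_nonneg_left hsuff hxy'.le
  intro x y hx hy _ hne
  rcases lt_or_gt_of_ne hne with h | h
  · have := main y x hx h
    rwa [abs_sub_comm (d y) (d x), abs_sub_comm y x, max_comm] at this
  · exact main x y hy h
end

section
/- Let a > 0 and let d : [0,∞) → [0,∞) satisfy: for all x, y with |x − y| ≤ a, |d(x) − d(y)|·a ≤ |x − y|·max(d(x), d(y)). Let b be a probability measure on [0,∞) and ρ(x,y) = min(a, |x−y|). Then for all x, y ≥ 0 with max(d(x),d(y)) > 0, I(x,y) := ((d(x)−d(y))₊/max(d(x),d(y)))·∫ρ(z,y) db(z) + ((d(y)−d(x))₊/max(d(x),d(y)))·∫ρ(x,z) db(z) ≤ ρ(x,y). -/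
open MeasureTheory

theorem stmt_4 (a : ℝ) (ha : 0 < a) (d : ℝ → ℝ) (hd : ∀ x, 0 ≤ x → 0 ≤ d x)
    (hcond : ∀ x y : ℝ, 0 ≤ x → 0 ≤ y → |x - y| ≤ a →
      |d x - d y| * a ≤ |x - y| * max (d x) (d y))
    (b : Measure ℝ) [IsProbabilityMeasure b] (hb : b (Set.Ici 0) = 1) :
    ∀ x y : ℝ, 0 ≤ x → 0 ≤ y → 0 < max (d x) (d y) →
      (max (d x - d y) 0 / max (d x) (d y)) * (∫ z, min a |z - y| ∂b) +
        (max (d y - d x) 0 / max (d x) (d y)) * (∫ z, min a |x - z| ∂b)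
        ≤ min a |x - y| := by
  -- bounds on the integrals
  have hint : ∀ f : ℝ → ℝ, Continuous f → (∀ z, 0 ≤ f z) → (∀ z, f z ≤ a) →
      0 ≤ (∫ z, f z ∂b) ∧ (∫ z, f z ∂b) ≤ a := by
    intro f hf h0 hle
    have hinteg : Integrable f b := by
      refine (integrable_const a).mono' hf.aestronglyMeasurable ?_
      filter_upwards with z
      rw [Real.norm_eq_abs, abs_of_nonneg (h0 z)]
      exact hle z
    constructor
    · exact integral_nonneg h0
    · calc (∫ z, f z ∂b) ≤ ∫ _, a ∂b := integral_mono hinteg (integrable_const a) hle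
        _ = a := by simp
  -- key scalar inequality
  have key : ∀ x y : ℝ, 0 ≤ x → 0 ≤ y → d y ≤ d x → 0 < d x →
      (d x - d y) / d x * a ≤ min a |x - y| := by
    intro x y hx hy hdle hdx
    have hcoef0 : 0 ≤ (d x - d y) / d x := div_nonneg (by linarith) hdx.le
    have hcoef1 : (d x - d y) / d x ≤ 1 := by
      rw [div_le_one hdx]
      have := hd y hy; linarith
    refine le_min ?_ ?_
    · nlinarith
    · rcases le_total |x - y| a with h | h
      · have hc := hcond x y hx hy h
        rw [max_eq_left hdle] at hc
        rw [abs_of_nonneg (by linarith)] at hc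
        rw [div_mul_eq_mul_div, div_le_iff₀ hdx]
        nlinarith [abs_nonneg (x - y)]
      · calc (d x - d y) / d x * a ≤ 1 * a := by nlinarith
          _ = a := one_mul a
          _ ≤ |x - y| := h
  intro x y hx hy hmax
  have hI1 := hint (fun z => min a |z - y|)
    (continuous_const.min (continuous_id.sub continuous_const).abs)
    (fun z => le_min ha.le (abs_nonneg _)) (fun z => min_le_left _ _)
  have hI2 := hint (fun z => min a |x - z|)
    (continuous_const.min (continuous_const.sub continuous_id).abs)
    (fun z => le_min ha.le (abs_nonneg _)) (fun z => min_le_left _ _)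
  rcases le_total (d y) (d x) with h | h
  · have hdx : 0 < d x := by rw [max_eq_left h] at hmax; exact hmax
    have h2 : max (d y - d x) 0 = 0 := max_eq_right (by linarith)
    have h1 : max (d x - d y) 0 = d x - d y := max_eq_left (by linarith)
    rw [h1, h2, max_eq_left h, zero_div, zero_mul, add_zero]
    have hcoef0 : 0 ≤ (d x - d y) / d x := div_nonneg (by linarith) hdx.le
    calc (d x - d y) / d x * (∫ z, min a |z - y| ∂b)
        ≤ (d x - d y) / d x * a := by
          exact mul_le_mul_of_nonneg_left hI1.2 hcoef0
      _ ≤ min a |x - y| := key x y hx hy h hdx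
  · have hdy : 0 < d y := by rw [max_eq_right h] at hmax; exact hmax
    have h1 : max (d x - d y) 0 = 0 := max_eq_right (by linarith)
    have h2 : max (d y - d x) 0 = d y - d x := max_eq_left (by linarith)
    rw [h1, h2, max_eq_right h, zero_div, zero_mul, zero_add]
    have hcoef0 : 0 ≤ (d y - d x) / d y := div_nonneg (by linarith) hdy.le
    have habs : |x - y| = |y - x| := abs_sub_comm x y
    calc (d y - d x) / d y * (∫ z, min a |x - z| ∂b)
        ≤ (d y - d x) / d y * a := mul_le_mul_of_nonneg_left hI2.2 hcoef0
      _ ≤ min a |y - x| := key y x hy hx h hdy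
      _ = min a |x - y| := by rw [habs]
end

section
/- Let d : [0,∞) → [0,∞) and a > 0 satisfy: for all x, y with |x−y| ≤ a, |d(x)−d(y)|·a ≤ |x−y|·max(d(x),d(y)). Define on J = [0,∞) × ℝ^d the cost ϱ(x,z,y,r) = min(a, |x−y| + |z−r|). Then for all (x,z), (y,r) ∈ J, assuming without loss of generality d(x) ≥ d(y), the quantity Δ(x,z,y,r) := −d(x)·min(|x−y|+|z−r|, a) + d(y)·min(|z−r|, a) + (d(x)−d(y))·a is ≤ 0. -/
theorem stmt_8 (a : ℝ) (ha : 0 < a) (n : ℕ)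
    (d : ℝ → ℝ) (hd : ∀ x, 0 ≤ x → 0 ≤ d x)
    (hcond : ∀ x y : ℝ, 0 ≤ x → 0 ≤ y → |x - y| ≤ a →
      |d x - d y| * a ≤ |x - y| * max (d x) (d y)) :
    ∀ (x y : ℝ) (z r : EuclideanSpace ℝ (Fin n)), 0 ≤ x → 0 ≤ y →
      d y ≤ d x →
      -(d x * min (|x - y| + ‖z - r‖) a) + d y * min ‖z - r‖ a
        + (d x - d y) * a ≤ 0 := by
  intro x y z r hx hy hdxy
  set s := |x - y| with hs
  set t := ‖z - r‖ with ht
  have hs0 : 0 ≤ s := abs_nonneg _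
  have ht0 : 0 ≤ t := norm_nonneg _
  have hdy0 : 0 ≤ d y := hd y hy
  rcases le_or_gt a (s + t) with h | h
  · rw [min_eq_right h]
    have h1 : d y * min t a ≤ d y * a :=
      mul_le_mul_of_nonneg_left (min_le_right _ _) hdy0
    nlinarith
  · have hsa : s ≤ a := by linarith
    have hc := hcond x y hx hy hsa
    rw [abs_of_nonneg (by linarith), max_eq_left hdxy] at hc
    rw [min_eq_left (by linarith), min_eq_left (by linarith)]
    nlinarith [mul_nonneg (sub_nonneg.mpr hdxy) ht0]
end

section
/- The function d(x₁,x₂) = α + β·x₁^{p₁} + γ·x₂^{p₂} with α > 0, β, γ ≥ 0, p₁, p₂ ≥ 1, satisfies: there exists a > 0 such that for all (x₁,x₂), (x̃₁,x̃₂) ∈ [0,∞)² with 2|x₁−x̃₁| + |x₂−x̃₂| ≤ a, |d(x₁,x₂) − d(x̃₁,x̃₂)|·a ≤ (|x₁−x̃₁| + |x₂−x̃₂|)·max(d(x₁,x₂), d(x̃₁,x̃₂)). -/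
private lemma auxB' (p : ℝ) (hp : 1 ≤ p) {x y : ℝ} (hy : 0 ≤ y) (hxy : y ≤ x) :
    x ^ p - y ^ p ≤ p * x ^ (p - 1) * (x - y) := by
  have hx : 0 ≤ x := hy.trans hxy
  rcases eq_or_lt_of_le hx with h | hxpos
  · have hy0 : y = 0 := le_antisymm (hxy.trans h.symm.le) hy
    simp [← h, hy0, Real.zero_rpow (by linarith : p ≠ 0)]
  · have hs : -1 ≤ y / x - 1 := by
      have : 0 ≤ y / x := div_nonneg hy hx
      linarith
    have hb := one_add_mul_self_le_rpow_one_add hs hp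
    rw [add_sub_cancel] at hb
    have hdiv : (y / x) ^ p = y ^ p / x ^ p := Real.div_rpow hy hx p
    rw [hdiv] at hb
    have hxp : 0 < x ^ p := Real.rpow_pos_of_pos hxpos p
    have h1 : x ^ (p - 1) * x = x ^ p := by
      rw [← Real.rpow_add_one hxpos.ne' (p - 1)]; ring_nf
    have hb2 : (1 + p * (y / x - 1)) * x ^ p ≤ y ^ p := by
      rw [← le_div_iff₀ hxp]; exact hb
    have hxx : (y / x) * x = y := div_mul_cancel₀ y hxpos.ne'
    have h3 : (y / x) * x ^ p = y * x ^ (p - 1) := by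
      calc (y / x) * x ^ p = (y / x * x) * x ^ (p - 1) := by rw [← h1]; ring
        _ = y * x ^ (p - 1) := by rw [hxx]
    have hb3 : x ^ p + p * (y * x ^ (p - 1)) - p * (x ^ (p - 1) * x) ≤ y ^ p := by
      calc x ^ p + p * (y * x ^ (p - 1)) - p * (x ^ (p - 1) * x)
          = (1 + p * (y / x - 1)) * x ^ p := by rw [h1, ← h3]; ring
        _ ≤ y ^ p := hb2
    nlinarith [hb3, h1]

private lemma auxB (p : ℝ) (hp : 1 ≤ p) {x y : ℝ} (hx : 0 ≤ x) (hy : 0 ≤ y) :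
    |x ^ p - y ^ p| ≤ p * (max x y) ^ (p - 1) * |x - y| := by
  rcases le_total y x with h | h
  · rw [max_eq_left h, abs_of_nonneg (by linarith : 0 ≤ x - y),
      abs_of_nonneg (sub_nonneg.2 (Real.rpow_le_rpow hy h (by linarith)))]
    exact auxB' p hp hy h
  · rw [max_eq_right h, abs_sub_comm, abs_sub_comm x y,
      abs_of_nonneg (by linarith : 0 ≤ y - x),
      abs_of_nonneg (sub_nonneg.2 (Real.rpow_le_rpow hx h (by linarith)))]
    exact auxB' p hp hx h

private lemma auxA {α β p a M : ℝ} (hα : 0 < α) (hβ : 0 ≤ β) (hp : 1 ≤ p)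
    (ha : 0 < a) (ha1 : a ≤ 1 / (2 * p)) (ha2 : a ≤ α / (β * p + 1)) (hM : 0 ≤ M) :
    a * (β * p * M ^ (p - 1)) ≤ α + β * M ^ p / 2 := by
  have hMp : 0 ≤ M ^ p := Real.rpow_nonneg hM p
  have hMp1 : 0 ≤ M ^ (p - 1) := Real.rpow_nonneg hM (p - 1)
  rcases le_total M 1 with h | h
  · have h1 : M ^ (p - 1) ≤ 1 := Real.rpow_le_one hM h (by linarith)
    have h2 : a * (β * p) ≤ α := by
      rw [le_div_iff₀ (by positivity : (0:ℝ) < β * p + 1)] at ha2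
      nlinarith
    nlinarith [mul_nonneg (mul_nonneg (mul_nonneg ha.le hβ) (by linarith : (0:ℝ) ≤ p))
      (by linarith : (0:ℝ) ≤ 1 - M ^ (p - 1)), mul_nonneg hβ hMp]
  · have h1 : M ^ (p - 1) ≤ M ^ p :=
      Real.rpow_le_rpow_of_exponent_le h (by linarith)
    have h2 : a * (2 * p) ≤ 1 := by
      rw [le_div_iff₀ (by positivity : (0:ℝ) < 2 * p)] at ha1; linarith
    have c0 : 0 ≤ a * β * p := by positivity
    have t1 := mul_le_mul_of_nonneg_left h1 c0
    have t2 := mul_le_mul_of_nonneg_right h2 (mul_nonneg hβ hMp)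
    nlinarith [t1, t2]

theorem stmt_10 (α β γ p₁ p₂ : ℝ) (hα : 0 < α) (hβ : 0 ≤ β) (hγ : 0 ≤ γ)
    (hp₁ : 1 ≤ p₁) (hp₂ : 1 ≤ p₂)
    (d : ℝ → ℝ → ℝ)
    (hd : ∀ x₁ x₂, 0 ≤ x₁ → 0 ≤ x₂ → d x₁ x₂ = α + β * x₁ ^ p₁ + γ * x₂ ^ p₂) :
    ∃ a > 0, ∀ x₁ x₂ y₁ y₂ : ℝ, 0 ≤ x₁ → 0 ≤ x₂ → 0 ≤ y₁ → 0 ≤ y₂ →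
      2 * |x₁ - y₁| + |x₂ - y₂| ≤ a →
      |d x₁ x₂ - d y₁ y₂| * a ≤ (|x₁ - y₁| + |x₂ - y₂|) * max (d x₁ x₂) (d y₁ y₂) := by
  set a := min (min (1 / (2 * p₁)) (1 / (2 * p₂))) (min (α / (β * p₁ + 1)) (α / (γ * p₂ + 1)))
    with ha_def
  have hpa : 0 < a := by
    apply lt_min <;> apply lt_min <;> positivity
  refine ⟨a, hpa, ?_⟩
  intro x₁ x₂ y₁ y₂ hx₁ hx₂ hy₁ hy₂ _
  rw [hd x₁ x₂ hx₁ hx₂, hd y₁ y₂ hy₁ hy₂]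
  set M₁ := max x₁ y₁ with hM₁
  set M₂ := max x₂ y₂ with hM₂
  have hM₁0 : 0 ≤ M₁ := le_max_of_le_left hx₁
  have hM₂0 : 0 ≤ M₂ := le_max_of_le_left hx₂
  -- bound on |d - d|
  have hdiff : |(α + β * x₁ ^ p₁ + γ * x₂ ^ p₂) - (α + β * y₁ ^ p₁ + γ * y₂ ^ p₂)| ≤
      β * p₁ * M₁ ^ (p₁ - 1) * |x₁ - y₁| + γ * p₂ * M₂ ^ (p₂ - 1) * |x₂ - y₂| := by
    have e : (α + β * x₁ ^ p₁ + γ * x₂ ^ p₂) - (α + β * y₁ ^ p₁ + γ * y₂ ^ p₂)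
        = β * (x₁ ^ p₁ - y₁ ^ p₁) + γ * (x₂ ^ p₂ - y₂ ^ p₂) := by ring
    rw [e]
    calc |β * (x₁ ^ p₁ - y₁ ^ p₁) + γ * (x₂ ^ p₂ - y₂ ^ p₂)|
        ≤ |β * (x₁ ^ p₁ - y₁ ^ p₁)| + |γ * (x₂ ^ p₂ - y₂ ^ p₂)| := abs_add_le _ _
      _ = β * |x₁ ^ p₁ - y₁ ^ p₁| + γ * |x₂ ^ p₂ - y₂ ^ p₂| := by
          rw [abs_mul, abs_mul, abs_of_nonneg hβ, abs_of_nonneg hγ]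
      _ ≤ β * (p₁ * M₁ ^ (p₁ - 1) * |x₁ - y₁|) + γ * (p₂ * M₂ ^ (p₂ - 1) * |x₂ - y₂|) := by
          gcongr
          · exact auxB p₁ hp₁ hx₁ hy₁
          · exact auxB p₂ hp₂ hx₂ hy₂
      _ = _ := by ring
  -- lower bound on max
  have hKle : α + β * M₁ ^ p₁ / 2 + γ * M₂ ^ p₂ / 2 ≤
      max (α + β * x₁ ^ p₁ + γ * x₂ ^ p₂) (α + β * y₁ ^ p₁ + γ * y₂ ^ p₂) := by
    have havg : (α + β * x₁ ^ p₁ + γ * x₂ ^ p₂ + (α + β * y₁ ^ p₁ + γ * y₂ ^ p₂)) / 2 ≤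
        max (α + β * x₁ ^ p₁ + γ * x₂ ^ p₂) (α + β * y₁ ^ p₁ + γ * y₂ ^ p₂) := by
      rcases le_total (α + β * x₁ ^ p₁ + γ * x₂ ^ p₂) (α + β * y₁ ^ p₁ + γ * y₂ ^ p₂) with h | h
      · rw [max_eq_right h]; linarith
      · rw [max_eq_left h]; linarith
    have h1 : M₁ ^ p₁ ≤ x₁ ^ p₁ + y₁ ^ p₁ := by
      rcases max_cases x₁ y₁ with ⟨h, _⟩ | ⟨h, _⟩ <;> rw [hM₁, h] <;>
        nlinarith [Real.rpow_nonneg hx₁ p₁, Real.rpow_nonneg hy₁ p₁]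
    have h2 : M₂ ^ p₂ ≤ x₂ ^ p₂ + y₂ ^ p₂ := by
      rcases max_cases x₂ y₂ with ⟨h, _⟩ | ⟨h, _⟩ <;> rw [hM₂, h] <;>
        nlinarith [Real.rpow_nonneg hx₂ p₂, Real.rpow_nonneg hy₂ p₂]
    nlinarith
  have hK0 : 0 ≤ α + β * M₁ ^ p₁ / 2 + γ * M₂ ^ p₂ / 2 := by
    have h1 := Real.rpow_nonneg hM₁0 p₁
    have h2 := Real.rpow_nonneg hM₂0 p₂
    nlinarith
  have hA1 : a * (β * p₁ * M₁ ^ (p₁ - 1)) ≤ α + β * M₁ ^ p₁ / 2 :=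
    auxA hα hβ hp₁ hpa ((min_le_left _ _).trans (min_le_left _ _))
      ((min_le_right _ _).trans (min_le_left _ _)) hM₁0
  have hA2 : a * (γ * p₂ * M₂ ^ (p₂ - 1)) ≤ α + γ * M₂ ^ p₂ / 2 :=
    auxA hα hγ hp₂ hpa ((min_le_left _ _).trans (min_le_right _ _))
      ((min_le_right _ _).trans (min_le_right _ _)) hM₂0
  calc |(α + β * x₁ ^ p₁ + γ * x₂ ^ p₂) - (α + β * y₁ ^ p₁ + γ * y₂ ^ p₂)| * a
      ≤ (β * p₁ * M₁ ^ (p₁ - 1) * |x₁ - y₁| + γ * p₂ * M₂ ^ (p₂ - 1) * |x₂ - y₂|) * a := by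
        exact mul_le_mul_of_nonneg_right hdiff hpa.le
    _ = |x₁ - y₁| * (a * (β * p₁ * M₁ ^ (p₁ - 1))) + |x₂ - y₂| * (a * (γ * p₂ * M₂ ^ (p₂ - 1))) := by
        ring
    _ ≤ |x₁ - y₁| * (α + β * M₁ ^ p₁ / 2 + γ * M₂ ^ p₂ / 2)
        + |x₂ - y₂| * (α + β * M₁ ^ p₁ / 2 + γ * M₂ ^ p₂ / 2) := by
        have hb1 : 0 ≤ β * M₁ ^ p₁ / 2 := div_nonneg (mul_nonneg hβ (Real.rpow_nonneg hM₁0 _)) (by norm_num)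
        have hb2 : 0 ≤ γ * M₂ ^ p₂ / 2 := div_nonneg (mul_nonneg hγ (Real.rpow_nonneg hM₂0 _)) (by norm_num)
        have hK1 : a * (β * p₁ * M₁ ^ (p₁ - 1)) ≤ α + β * M₁ ^ p₁ / 2 + γ * M₂ ^ p₂ / 2 := by
          linarith
        have hK2 : a * (γ * p₂ * M₂ ^ (p₂ - 1)) ≤ α + β * M₁ ^ p₁ / 2 + γ * M₂ ^ p₂ / 2 := by
          linarith
        exact add_le_add (mul_le_mul_of_nonneg_left hK1 (abs_nonneg _))
          (mul_le_mul_of_nonneg_left hK2 (abs_nonneg _))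
    _ = (|x₁ - y₁| + |x₂ - y₂|) * (α + β * M₁ ^ p₁ / 2 + γ * M₂ ^ p₂ / 2) := by ring
    _ ≤ _ := by
        apply mul_le_mul_of_nonneg_left hKle
        positivity
end

section
/- Let β be a probability measure on [0,1] with m := ∫₀¹ r dβ(r) < 1, let a > 0, and let d : [0,∞) → [0,∞) satisfy: a·|d(x)−d(y)| ≤ (1−m)·|x−y|·max(d(x),d(y)) whenever |x−y| ≤ a. Set ϱ(x,y) = min(a,|x−y|). Then for all x, y ≥ 0, Δ(x,y) := −max(d(x),d(y))·ϱ(x,y) + min(d(x),d(y))·∫₀¹ ϱ(rx,ry) dβ(r) + (d(x)−d(y))₊·∫₀¹ ϱ(rx,y) dβ(r) + (d(y)−d(x))₊·∫₀¹ ϱ(x,ry) dβ(r) ≤ 0. -/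
open MeasureTheory

lemma stmt_11_key (β : Measure ℝ) [IsProbabilityMeasure β] (hβ : β (Set.Icc 0 1) = 1)
    (m : ℝ) (hm : m = ∫ r, r ∂β) (hm1 : m < 1)
    (a : ℝ) (ha : 0 < a) (d : ℝ → ℝ) (hd : ∀ x, 0 ≤ x → 0 ≤ d x)
    (hcond : ∀ x y : ℝ, 0 ≤ x → 0 ≤ y → |x - y| ≤ a →
      a * |d x - d y| ≤ (1 - m) * (|x - y| * max (d x) (d y)))
    (x y : ℝ) (hx : 0 ≤ x) (hy : 0 ≤ y) (hdxy : d y ≤ d x) :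
      -(max (d x) (d y) * min a |x - y|)
        + min (d x) (d y) * (∫ r, min a |r * x - r * y| ∂β)
        + max (d x - d y) 0 * (∫ r, min a |r * x - y| ∂β)
        + max (d y - d x) 0 * (∫ r, min a |x - r * y| ∂β) ≤ 0 := by
  rw [max_eq_left hdxy, min_eq_right hdxy, max_eq_left (sub_nonneg.mpr hdxy),
    max_eq_right (sub_nonpos.mpr hdxy), zero_mul, add_zero]
  -- a.e. r ∈ [0,1]
  have hae : ∀ᵐ r ∂β, r ∈ Set.Icc (0:ℝ) 1 := by
    rw [ae_iff]
    have hs : {r : ℝ | ¬ r ∈ Set.Icc (0:ℝ) 1} = (Set.Icc (0:ℝ) 1)ᶜ := rfl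
    rw [hs, measure_compl measurableSet_Icc (measure_ne_top _ _), hβ, measure_univ, tsub_self]
  have hm0 : 0 ≤ m := by
    rw [hm]
    exact integral_nonneg_of_ae (hae.mono fun r hr => hr.1)
  have hid : Integrable (fun r : ℝ => r) β := by
    refine (integrable_const (1:ℝ)).mono' aestronglyMeasurable_id
      (hae.mono fun r hr => ?_)
    rw [Real.norm_eq_abs, abs_le]
    exact ⟨by linarith [hr.1], hr.2⟩
  have hint : ∀ f : ℝ → ℝ, Continuous f → Integrable (fun r => min a |f r|) β := by
    intro f hf
    refine (integrable_const a).mono' (continuous_const.min hf.abs).aestronglyMeasurable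
      (ae_of_all _ fun r => ?_)
    rw [Real.norm_eq_abs, abs_of_nonneg (le_min ha.le (abs_nonneg _))]
    exact min_le_left _ _
  have h_le_a : ∀ f : ℝ → ℝ, Continuous f → (∫ r, min a |f r| ∂β) ≤ a := by
    intro f hf
    calc (∫ r, min a |f r| ∂β) ≤ ∫ _, a ∂β :=
          integral_mono (hint f hf) (integrable_const a) fun r => min_le_left _ _
      _ = a := by simp
  have hI1 : (∫ r, min a |r * x - r * y| ∂β) ≤ m * |x - y| := by
    have h1 : (∫ r, min a |r * x - r * y| ∂β) ≤ ∫ r, r * |x - y| ∂β := by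
      refine integral_mono_ae (hint _ (by continuity)) (hid.mul_const _)
        (hae.mono fun r hr => ?_)
      calc min a |r * x - r * y| ≤ |r * x - r * y| := min_le_right _ _
        _ = |r| * |x - y| := by rw [← abs_mul]; ring_nf
        _ = r * |x - y| := by rw [abs_of_nonneg hr.1]
    calc (∫ r, min a |r * x - r * y| ∂β) ≤ ∫ r, r * |x - y| ∂β := h1
      _ = m * |x - y| := by rw [integral_mul_const, hm]
  have hI2a : (∫ r, min a |r * x - y| ∂β) ≤ a := h_le_a _ (by continuity)
  have h0y : 0 ≤ d y := hd y hy
  have hsub : 0 ≤ d x - d y := sub_nonneg.mpr hdxy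
  rcases le_total a |x - y| with h | h
  · rw [min_eq_left h]
    have hI1a : (∫ r, min a |r * x - r * y| ∂β) ≤ a := h_le_a _ (by continuity)
    nlinarith [mul_le_mul_of_nonneg_left hI1a h0y, mul_le_mul_of_nonneg_left hI2a hsub]
  · rw [min_eq_right h]
    have hc := hcond x y hx hy h
    rw [abs_of_nonneg hsub, max_eq_left hdxy] at hc
    have t1 : d y * (∫ r, min a |r * x - r * y| ∂β) ≤ d y * (m * |x - y|) :=
      mul_le_mul_of_nonneg_left hI1 h0y
    have t2 : (d x - d y) * (∫ r, min a |r * x - y| ∂β) ≤ (d x - d y) * a :=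
      mul_le_mul_of_nonneg_left hI2a hsub
    have t3 : (d x - d y) * a ≤ (1 - m) * (|x - y| * d x) := by
      rw [mul_comm]; exact hc
    have t4 : m * (|x - y| * (d y - d x)) ≤ 0 :=
      mul_nonpos_of_nonneg_of_nonpos hm0
        (mul_nonpos_of_nonneg_of_nonpos (abs_nonneg _) (sub_nonpos.mpr hdxy))
    linarith [t1, t2, t3, t4]

theorem stmt_11 (β : Measure ℝ) [IsProbabilityMeasure β] (hβ : β (Set.Icc 0 1) = 1)
    (m : ℝ) (hm : m = ∫ r, r ∂β) (hm1 : m < 1)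
    (a : ℝ) (ha : 0 < a) (d : ℝ → ℝ) (hd : ∀ x, 0 ≤ x → 0 ≤ d x)
    (hcond : ∀ x y : ℝ, 0 ≤ x → 0 ≤ y → |x - y| ≤ a →
      a * |d x - d y| ≤ (1 - m) * (|x - y| * max (d x) (d y))) :
    ∀ x y : ℝ, 0 ≤ x → 0 ≤ y →
      -(max (d x) (d y) * min a |x - y|)
        + min (d x) (d y) * (∫ r, min a |r * x - r * y| ∂β)
        + max (d x - d y) 0 * (∫ r, min a |r * x - y| ∂β)
        + max (d y - d x) 0 * (∫ r, min a |x - r * y| ∂β) ≤ 0 := by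
  intro x y hx hy
  rcases le_total (d y) (d x) with hdxy | hdxy
  · exact stmt_11_key β hβ m hm hm1 a ha d hd hcond x y hx hy hdxy
  · have H := stmt_11_key β hβ m hm hm1 a ha d hd hcond y x hy hx hdxy
    have e1 : (fun r : ℝ => min a |r * y - r * x|) = fun r : ℝ => min a |r * x - r * y| := by
      funext r; rw [abs_sub_comm]
    have e2 : (fun r : ℝ => min a |r * y - x|) = fun r : ℝ => min a |x - r * y| := by
      funext r; rw [abs_sub_comm]
    have e3 : (fun r : ℝ => min a |y - r * x|) = fun r : ℝ => min a |r * x - y| := by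
      funext r; rw [abs_sub_comm]
    rw [e1, e2, e3, max_comm (d y) (d x), min_comm (d y) (d x), abs_sub_comm y x] at H
    linarith [H]
end
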